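/- Let N ≥ 1 be a natural number, ν ∈ (0,1), μ = 1 − ν, and α > 0. Define j(x,t) = e^{−αt} ∫₀¹ (1−u)^{N−x} (1 + (μ/ν)u)^{x} u^{α−1} du for integers 0 ≤ x ≤ N and t ∈ ℝ. Then for every integer 0 ≤ x ≤ N−1 and every t ∈ ℝ, (∂/∂t) j(x,t) + μ·x·(j(x−1,t) − j(x,t)) + ν·(N−x)·(j(x+1,t) − j(x,t)) = 0. -/

import Mathlib

open Filter Topology MeasureTheory Set

private lemma ehr_integrable {α : ℝ} (hα : 0 < α) {g : ℝ → ℝ} (hg : Continuous g) :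
    IntegrableOn (fun u => g u * u ^ (α - 1)) (Ioo (0:ℝ) 1) := by
  have h1 : IntervalIntegrable (fun u : ℝ => u ^ (α - 1)) volume 0 1 :=
    intervalIntegral.intervalIntegrable_rpow' (by linarith)
  have h2 := h1.continuousOn_mul hg.continuousOn
  rwa [intervalIntegrable_iff_integrableOn_Ioo_of_le (by norm_num)] at h2

/-- FTC step: the integral of the derivative of `u ^ α * (1-u)^n * (1+c*u)^x` over `(0,1)`
vanishes when `1 ≤ n` and `0 < α`. -/
private lemma ehr_ftc {α : ℝ} (hα : 0 < α) (c : ℝ) {n x : ℕ} (hn : 1 ≤ n) :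
    ∫ u in Ioo (0:ℝ) 1,
      (α * ((1 - u) ^ n * (1 + c * u) ^ x)
        + u * (c * x * ((1 - u) ^ n * (1 + c * u) ^ (x - 1))
            - n * ((1 - u) ^ (n - 1) * (1 + c * u) ^ x))) * u ^ (α - 1) = 0 := by
  set F : ℝ → ℝ := fun u => u ^ α * ((1 - u) ^ n * (1 + c * u) ^ x) with hF
  set D : ℝ → ℝ := fun u =>
      (α * ((1 - u) ^ n * (1 + c * u) ^ x)
        + u * (c * x * ((1 - u) ^ n * (1 + c * u) ^ (x - 1))
            - n * ((1 - u) ^ (n - 1) * (1 + c * u) ^ x))) * u ^ (α - 1) with hD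
  have hcont : ContinuousOn F (Icc 0 1) :=
    ((Real.continuous_rpow_const hα.le).mul (by continuity)).continuousOn
  have hderiv : ∀ u ∈ Ioo (0:ℝ) 1, HasDerivAt F (D u) u := by
    intro u hu
    have hu0 : u ≠ 0 := ne_of_gt hu.1
    have h1 : HasDerivAt (fun u : ℝ => u ^ α) (α * u ^ (α - 1)) u :=
      Real.hasDerivAt_rpow_const (Or.inl hu0)
    have h2 : HasDerivAt (fun u : ℝ => (1 - u) ^ n)
        ((n : ℝ) * (1 - u) ^ (n - 1) * (-1)) u := by
      have := (((hasDerivAt_id u).const_sub 1).fun_pow n)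
      simpa using this
    have h3 : HasDerivAt (fun u : ℝ => (1 + c * u) ^ x)
        ((x : ℝ) * (1 + c * u) ^ (x - 1) * c) u := by
      have := ((((hasDerivAt_id u).const_mul c).const_add 1).fun_pow x)
      simpa using this
    have h4 := h1.fun_mul (h2.fun_mul h3)
    refine HasDerivAt.congr_deriv h4 ?_
    have hry : u ^ α = u ^ (α - 1) * u := by
      rw [← Real.rpow_add_one hu0 (α - 1)]; ring_nf
    rw [hD]
    simp only []
    rw [hry]
    ring
  have hint : IntervalIntegrable D volume 0 1 := by
    rw [intervalIntegrable_iff_integrableOn_Ioo_of_le (by norm_num)]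
    exact ehr_integrable hα (by continuity)
  have key := intervalIntegral.integral_eq_sub_of_hasDerivAt_of_le (by norm_num) hcont hderiv hint
  have hF1 : F 1 = 0 := by
    simp only [hF]
    rw [show (1:ℝ) - 1 = 0 by ring, zero_pow (by omega)]
    ring
  have hF0 : F 0 = 0 := by
    simp only [hF]
    rw [Real.zero_rpow (ne_of_gt hα)]
    ring
  rw [intervalIntegral.integral_of_le (by norm_num), integral_Ioc_eq_integral_Ioo] at key
  rw [key, hF1, hF0, sub_zero]

private lemma ehr_pointwise (N x : ℕ) (hx : x < N) (ν μ α u : ℝ)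
    (hν0 : ν ≠ 0) (hμ : μ = 1 - ν) :
    μ * x * ((1-u)^(N-(x-1)) * (1+(μ/ν)*u)^(x-1) * u^(α-1)
        - (1-u)^(N-x) * (1+(μ/ν)*u)^x * u^(α-1))
      + ν * ((N:ℝ) - x) * ((1-u)^(N-(x+1)) * (1+(μ/ν)*u)^(x+1) * u^(α-1)
        - (1-u)^(N-x) * (1+(μ/ν)*u)^x * u^(α-1))
      - α * ((1-u)^(N-x) * (1+(μ/ν)*u)^x * u^(α-1))
    = -((α * ((1-u)^(N-x) * (1+(μ/ν)*u)^x)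
        + u * ((μ/ν) * x * ((1-u)^(N-x) * (1+(μ/ν)*u)^(x-1))
            - ((N-x : ℕ) : ℝ) * ((1-u)^(N-x-1) * (1+(μ/ν)*u)^x))) * u ^ (α-1)) := by
  subst hμ
  set c := (1-ν)/ν with hc
  have hc' : ν * c = 1 - ν := by rw [hc]; field_simp
  rcases Nat.eq_zero_or_pos x with rfl | hx1
  · obtain ⟨m, rfl⟩ : ∃ m, N = m + 1 := ⟨N-1, by omega⟩
    have e1 : m + 1 - (0-1) = m + 1 := by omega
    have e2 : m + 1 - (0+1) = m := by omega
    rw [e1, e2]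
    simp only [Nat.zero_sub]
    push_cast
    linear_combination (((m:ℝ)+1) * u * (1-u)^m * u^(α-1)) * hc'
  · obtain ⟨y, rfl⟩ : ∃ y, x = y + 1 := ⟨x-1, by omega⟩
    obtain ⟨m, hm⟩ : ∃ m, N - (y+1) = m + 1 := ⟨N-y-2, by omega⟩
    have e1 : N - (y+1-1) = m+2 := by omega
    have e2 : N - (y+1+1) = m := by omega
    have e3 : N - (y+1) - 1 = m := by omega
    have e4 : y+1-1 = y := rfl
    have eN : (N:ℝ) = (y:ℝ) + 1 + ((m:ℝ)+1) := by
      have h : N = (y+1)+(m+1) := by omega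
      rw [h]; push_cast; ring
    rw [e1, e2, e3, e4, hm, eN]
    push_cast
    linear_combination (u * u^(α-1) * (((y:ℝ)+1) * (1-u)^(m+1) * (1+c*u)^y
      + ((m:ℝ)+1) * (1-u)^m * (1+c*u)^(y+1))) * hc'
private lemma ehr_key (N x : ℕ) (hx : x < N) {ν μ α : ℝ}
    (hν0 : 0 < ν) (hμ : μ = 1 - ν) (hα : 0 < α) :
    μ * x * ((∫ u in Ioo (0:ℝ) 1, (1-u)^(N-(x-1)) * (1+(μ/ν)*u)^(x-1) * u^(α-1))
        - ∫ u in Ioo (0:ℝ) 1, (1-u)^(N-x) * (1+(μ/ν)*u)^x * u^(α-1))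
      + ν * ((N:ℝ) - x) * ((∫ u in Ioo (0:ℝ) 1, (1-u)^(N-(x+1)) * (1+(μ/ν)*u)^(x+1) * u^(α-1))
        - ∫ u in Ioo (0:ℝ) 1, (1-u)^(N-x) * (1+(μ/ν)*u)^x * u^(α-1))
      = α * ∫ u in Ioo (0:ℝ) 1, (1-u)^(N-x) * (1+(μ/ν)*u)^x * u^(α-1) := by
  have i : ∀ y : ℕ, IntegrableOn
      (fun u : ℝ => (1-u)^(N-y) * (1+(μ/ν)*u)^y * u^(α-1)) (Ioo (0:ℝ) 1) volume :=
    fun y => ehr_integrable hα (g := fun u => (1-u)^(N-y) * (1+(μ/ν)*u)^y) (by continuity)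
  have i1 := i (x-1); have i2 := i x; have i3 := i (x+1)
  have j1 : Integrable (fun a : ℝ => μ * x * ((1-a)^(N-(x-1)) * (1+(μ/ν)*a)^(x-1) * a^(α-1)
      - (1-a)^(N-x) * (1+(μ/ν)*a)^x * a^(α-1))) (volume.restrict (Ioo (0:ℝ) 1)) :=
    (i1.sub i2).const_mul _
  have j2 : Integrable (fun a : ℝ => ν * ((N:ℝ) - x) * ((1-a)^(N-(x+1)) * (1+(μ/ν)*a)^(x+1) * a^(α-1)
      - (1-a)^(N-x) * (1+(μ/ν)*a)^x * a^(α-1))) (volume.restrict (Ioo (0:ℝ) 1)) :=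
    (i3.sub i2).const_mul _
  have j3 : Integrable (fun a : ℝ => α * ((1-a)^(N-x) * (1+(μ/ν)*a)^x * a^(α-1)))
      (volume.restrict (Ioo (0:ℝ) 1)) := i2.const_mul _
  have j12 : Integrable (fun a : ℝ => μ * x * ((1-a)^(N-(x-1)) * (1+(μ/ν)*a)^(x-1) * a^(α-1)
      - (1-a)^(N-x) * (1+(μ/ν)*a)^x * a^(α-1))
      + ν * ((N:ℝ) - x) * ((1-a)^(N-(x+1)) * (1+(μ/ν)*a)^(x+1) * a^(α-1)
      - (1-a)^(N-x) * (1+(μ/ν)*a)^x * a^(α-1))) (volume.restrict (Ioo (0:ℝ) 1)) :=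
    j1.add j2
  rw [← integral_sub i1 i2, ← integral_sub i3 i2, eq_comm, ← sub_eq_zero,
    ← integral_const_mul, ← integral_const_mul, ← integral_const_mul,
    ← integral_add j1 j2, ← integral_sub j3 j12]
  have hfun2 : ∀ u : ℝ,
      α * ((1-u)^(N-x) * (1+(μ/ν)*u)^x * u^(α-1))
        - (μ * x * ((1-u)^(N-(x-1)) * (1+(μ/ν)*u)^(x-1) * u^(α-1)
            - (1-u)^(N-x) * (1+(μ/ν)*u)^x * u^(α-1))
          + ν * ((N:ℝ) - x) * ((1-u)^(N-(x+1)) * (1+(μ/ν)*u)^(x+1) * u^(α-1)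
            - (1-u)^(N-x) * (1+(μ/ν)*u)^x * u^(α-1)))
      = (α * ((1-u)^(N-x) * (1+(μ/ν)*u)^x)
          + u * ((μ/ν) * x * ((1-u)^(N-x) * (1+(μ/ν)*u)^(x-1))
              - ((N-x : ℕ) : ℝ) * ((1-u)^(N-x-1) * (1+(μ/ν)*u)^x))) * u ^ (α-1) := by
    intro u
    have := ehr_pointwise N x hx ν μ α u (ne_of_gt hν0) hμ
    linarith [this]
  calc (∫ u in Ioo (0:ℝ) 1,
        (α * ((1-u)^(N-x) * (1+(μ/ν)*u)^x * u^(α-1))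
        - (μ * x * ((1-u)^(N-(x-1)) * (1+(μ/ν)*u)^(x-1) * u^(α-1)
            - (1-u)^(N-x) * (1+(μ/ν)*u)^x * u^(α-1))
          + ν * ((N:ℝ) - x) * ((1-u)^(N-(x+1)) * (1+(μ/ν)*u)^(x+1) * u^(α-1)
            - (1-u)^(N-x) * (1+(μ/ν)*u)^x * u^(α-1)))))
      = ∫ u in Ioo (0:ℝ) 1,
          (α * ((1-u)^(N-x) * (1+(μ/ν)*u)^x)
            + u * ((μ/ν) * x * ((1-u)^(N-x) * (1+(μ/ν)*u)^(x-1))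
              - ((N-x : ℕ) : ℝ) * ((1-u)^(N-x-1) * (1+(μ/ν)*u)^x))) * u ^ (α-1) := by
        exact integral_congr_ae (Filter.Eventually.of_forall fun u => hfun2 u)
    _ = 0 := ehr_ftc hα (μ/ν) (n := N - x) (x := x) (by omega)

theorem ehrenfest_Jalpha_harmonic
    (N : ℕ) (hN : 1 ≤ N) (ν μ : ℝ) (hν : ν ∈ Set.Ioo (0:ℝ) 1) (hμ : μ = 1 - ν)
    (α : ℝ) (hα : 0 < α) (j : ℕ → ℝ → ℝ)
    (hj : ∀ (x : ℕ) (t : ℝ),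
      j x t = Real.exp (-α * t) *
        ∫ u in Set.Ioo (0:ℝ) 1,
          (1 - u) ^ (N - x) * (1 + (μ / ν) * u) ^ x * u ^ (α - 1)) :
    ∀ (x : ℕ), x ≤ N - 1 → ∀ t : ℝ,
      deriv (j x) t
        + μ * x * (j (x - 1) t - j x t)
        + ν * ((N : ℝ) - x) * (j (x + 1) t - j x t) = 0 := by
  intro x hx t
  have hxN : x < N := by omega
  set I : ℕ → ℝ := fun y => ∫ u in Set.Ioo (0:ℝ) 1,
      (1 - u) ^ (N - y) * (1 + (μ / ν) * u) ^ y * u ^ (α - 1) with hI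
  have hjx : j x = fun s => Real.exp (-α * s) * I x := funext fun s => hj x s
  have hD : deriv (j x) t = -α * Real.exp (-α * t) * I x := by
    rw [hjx]
    have h1 : HasDerivAt (fun s : ℝ => -α * s) (-α) t := by
      simpa using (hasDerivAt_id t).const_mul (-α)
    have h2 := (h1.exp).mul_const (I x)
    rw [h2.deriv]
    ring
  have key := ehr_key N x hxN hν.1 hμ hα
  rw [hD, hj (x-1) t, hj x t, hj (x+1) t]
  simp only [hI]
  linear_combination Real.exp (-α * t) * key
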